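/- arXiv:2306.07039 — 3 statements merged into one kernel-verified Lean document; each statement's English description precedes it below -/
import Mathlib

section
/- Let p be a prime, c ≥ 1 an integer, and n a positive integer. Let h = (h_{ij}) ∈ GL_n(ℤ_p) be a matrix satisfying: (a) h_{ij} ∈ p^{|i-j|c}ℤ_p for all i ≠ j, and (b) h_{i1} + h_{i2} + ... + h_{in} - 1 ∈ p^{ic}ℤ_p for all 1 ≤ i ≤ n. Then det(h) ∈ 1 + p^c ℤ_p. -/
/-- Congruence conditions on a matrix `h ∈ GL_n(ℤ_p)` force `det h ∈ 1 + p^c ℤ_p`. -/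
theorem stmt2 (p : ℕ) [Fact p.Prime] (c n : ℕ) (hc : 1 ≤ c) (hn : 0 < n)
    (h : Matrix.GeneralLinearGroup (Fin n) ℤ_[p])
    (ha : ∀ i j : Fin n, i ≠ j →
      ((p : ℤ_[p]) ^ ((((i : ℕ) : ℤ) - ((j : ℕ) : ℤ)).natAbs * c)) ∣
        (h : Matrix (Fin n) (Fin n) ℤ_[p]) i j)
    (hb : ∀ i : Fin n, ((p : ℤ_[p]) ^ (((i : ℕ) + 1) * c)) ∣
      ((∑ j, (h : Matrix (Fin n) (Fin n) ℤ_[p]) i j) - 1)) :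
    ((p : ℤ_[p]) ^ c) ∣ ((h : Matrix (Fin n) (Fin n) ℤ_[p]).det - 1) := by
  set M := (h : Matrix (Fin n) (Fin n) ℤ_[p]) with hM
  -- off-diagonal entries are divisible by p^c
  have hoff : ∀ i j : Fin n, i ≠ j → ((p : ℤ_[p]) ^ c) ∣ M i j := by
    intro i j hij
    refine dvd_trans (pow_dvd_pow _ ?_) (ha i j hij)
    have h1 : 1 ≤ (((i : ℕ) : ℤ) - ((j : ℕ) : ℤ)).natAbs := by
      rcases Nat.eq_zero_or_pos (((i : ℕ) : ℤ) - ((j : ℕ) : ℤ)).natAbs with h0 | h0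
      · exfalso
        apply hij
        have : (((i : ℕ) : ℤ) - ((j : ℕ) : ℤ)) = 0 := Int.natAbs_eq_zero.mp h0
        have : ((i : ℕ) : ℤ) = ((j : ℕ) : ℤ) := by linarith
        exact Fin.ext (Int.ofNat_inj.mp this)
      · exact h0
    calc c = 1 * c := (one_mul c).symm
      _ ≤ (((i : ℕ) : ℤ) - ((j : ℕ) : ℤ)).natAbs * c := Nat.mul_le_mul_right c h1
  -- diagonal entries are ≡ 1 mod p^c
  have hdiag : ∀ i : Fin n, ((p : ℤ_[p]) ^ c) ∣ M i i - 1 := by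
    intro i
    have h2 : ((p : ℤ_[p]) ^ c) ∣ (∑ j, M i j) - 1 := by
      refine dvd_trans (pow_dvd_pow _ ?_) (hb i)
      calc c = 1 * c := (one_mul c).symm
        _ ≤ ((i : ℕ) + 1) * c := Nat.mul_le_mul_right c (Nat.succ_le_succ (Nat.zero_le _))
    have h3 : ((p : ℤ_[p]) ^ c) ∣ ∑ j ∈ Finset.univ.erase i, M i j :=
      Finset.dvd_sum fun j hj => hoff i j (Ne.symm (Finset.ne_of_mem_erase hj))
    have hsplit : M i i + ∑ j ∈ Finset.univ.erase i, M i j = ∑ j, M i j :=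
      Finset.add_sum_erase Finset.univ (fun j => M i j) (Finset.mem_univ i)
    have : M i i - 1 = ((∑ j, M i j) - 1) - ∑ j ∈ Finset.univ.erase i, M i j := by
      rw [← hsplit]; ring
    rw [this]
    exact dvd_sub h2 h3
  -- pass to the quotient ring
  set I : Ideal ℤ_[p] := Ideal.span {(p : ℤ_[p]) ^ c} with hI
  set f := Ideal.Quotient.mk I with hf
  have hMmap : M.map f = 1 := by
    ext i j
    by_cases hij : i = j
    · subst hij
      rw [Matrix.map_apply, Matrix.one_apply_eq, ← map_one f]
      exact Ideal.Quotient.eq.mpr (Ideal.mem_span_singleton.mpr (hdiag i))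
    · rw [Matrix.map_apply, Matrix.one_apply_ne hij, ← map_zero f]
      refine Ideal.Quotient.eq.mpr (Ideal.mem_span_singleton.mpr ?_)
      simpa using hoff i j hij
  have hdet : f M.det = f 1 := by
    rw [RingHom.map_det, RingHom.mapMatrix_apply, hMmap, Matrix.det_one, map_one]
  exact Ideal.mem_span_singleton.mp (Ideal.Quotient.eq.mp hdet)
end

section
/- Let p be a prime, c ≥ 1, and n ≥ 1. Define K_c to be the set of matrices h ∈ GL_n(ℤ_p) satisfying h_{ij} ∈ p^{|i-j|c}ℤ_p for i ≠ j and h_{i1} + ... + h_{in} - 1 ∈ p^{ic}ℤ_p for 1 ≤ i ≤ n. Then K_c is a subgroup of GL_n(ℤ_p), K_{c+1} ⊆ K_c, and the index [K_c : K_{c+1}] equals p^{n(n+1)(2n+1)/6}. -/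
open PadicInt

variable {p : ℕ} [Fact p.Prime]

-- divisibility transfer
lemma dvd_toZModPow_iff {N e : ℕ} (he : e ≤ N) (x : ℤ_[p]) :
    (p : ZMod (p^N))^e ∣ toZModPow N x ↔ (p : ℤ_[p])^e ∣ x := by
  constructor
  · rintro ⟨y, hy⟩
    haveI : NeZero (p ^ N) := ⟨pow_ne_zero N (Fact.out (p := p.Prime)).ne_zero⟩
    have hy' : toZModPow N ((p:ℤ_[p])^e * ((y.val : ℕ) : ℤ_[p])) = toZModPow N x := by
      rw [map_mul, map_pow, map_natCast, map_natCast, ZMod.natCast_zmod_val, hy]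
    have hker : x - (p:ℤ_[p])^e * ((y.val : ℕ) : ℤ_[p]) ∈ RingHom.ker (toZModPow (p := p) N) := by
      rw [RingHom.mem_ker, map_sub, hy', sub_self]
    rw [ker_toZModPow, Ideal.mem_span_singleton] at hker
    have h2 : (p:ℤ_[p])^e ∣ x - (p:ℤ_[p])^e * ((y.val : ℕ) : ℤ_[p]) :=
      dvd_trans (pow_dvd_pow _ he) hker
    have h3 : (p:ℤ_[p])^e ∣ (x - (p:ℤ_[p])^e * ((y.val : ℕ) : ℤ_[p])) + (p:ℤ_[p])^e * ((y.val : ℕ) : ℤ_[p]) :=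
      dvd_add h2 (dvd_mul_right _ _)
    simpa using h3
  · intro h
    have := map_dvd (toZModPow (p := p) N) h
    simpa using this

lemma isUnit_of_isUnit_toZModPow {m : ℕ} (hm : 1 ≤ m) {x : ℤ_[p]} 
    (h : IsUnit (toZModPow m x)) : IsUnit x := by
  by_contra hx
  have hp : (p : ℤ_[p]) ∣ x := (PadicInt.norm_lt_one_iff_dvd x).mp (PadicInt.not_isUnit_iff.mp hx)
  have : (p : ZMod (p^m)) ∣ toZModPow m x := by
    have := map_dvd (toZModPow (p := p) m) hp
    simpa using this
  have hup : IsUnit (p : ZMod (p^m)) := isUnit_of_dvd_unit this h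
  have h0 : ((p : ZMod (p^m)))^m = 0 := by
    rw [← Nat.cast_pow, ZMod.natCast_self]
  have hz : IsUnit (0 : ZMod (p^m)) := h0 ▸ hup.pow m
  haveI : Fact (1 < p^m) := ⟨Nat.one_lt_pow (by omega) (Fact.out (p := p.Prime)).one_lt⟩
  rw [isUnit_zero_iff] at hz
  exact zero_ne_one hz

lemma card_dvd_subtype {N e : ℕ} (he : e ≤ N) :
    Nat.card {x : ZMod (p^N) // (p : ZMod (p^N))^e ∣ x} = p^(N - e) := by
  haveI : NeZero (p ^ N) := ⟨pow_ne_zero N (Fact.out (p := p.Prime)).ne_zero⟩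
  have hiff : ∀ x : ZMod (p^N), ((p : ZMod (p^N))^e ∣ x ↔ x ∈ AddSubgroup.zmultiples ((p : ZMod (p^N))^e)) := by
    intro x
    constructor
    · rintro ⟨y, rfl⟩
      rw [AddSubgroup.mem_zmultiples_iff]
      exact ⟨(y.val : ℤ), by rw [zsmul_eq_mul]; push_cast [ZMod.natCast_zmod_val]; ring⟩
    · rintro h
      rw [AddSubgroup.mem_zmultiples_iff] at h
      obtain ⟨k, hk⟩ := h
      exact ⟨(k : ZMod (p^N)), by rw [← hk, zsmul_eq_mul]; ring⟩
  rw [Nat.card_congr (Equiv.subtypeEquivRight hiff), Nat.card_zmultiples]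
  have : ((p : ZMod (p^N)))^e = ((p^e : ℕ) : ZMod (p^N)) := by push_cast; ring
  rw [this, ZMod.addOrderOf_coe _ (NeZero.ne _), Nat.gcd_eq_right (pow_dvd_pow p he),
    Nat.pow_div he (Fact.out (p := p.Prime)).pos]

-- exponent pattern
def eexp {n : ℕ} (i j : Fin n) : ℕ :=
  if i = j then (i : ℕ) + 1 else (((i : ℕ) : ℤ) - ((j : ℕ) : ℤ)).natAbs

/-- the congruence condition on a matrix -/
def CondM {n : ℕ} (c' : ℕ) {R : Type*} [CommRing R] (q : R)
    (m : Matrix (Fin n) (Fin n) R) : Prop :=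
  (∀ i j, i ≠ j → q ^ (eexp i j * c') ∣ m i j) ∧
    ∀ i, q ^ (eexp i i * c') ∣ (∑ j, m i j) - 1

lemma condM_iff_rows {n : ℕ} (c' : ℕ) {R : Type*} [CommRing R] (q : R)
    (m : Matrix (Fin n) (Fin n) R) :
    CondM c' q m ↔ ∀ i, (∀ j, i ≠ j → q ^ (eexp i j * c') ∣ m i j) ∧
      q ^ (eexp i i * c') ∣ (∑ j, m i j) - 1 := by
  constructor
  · exact fun h i => ⟨fun j hij => h.1 i j hij, h.2 i⟩
  · exact fun h => ⟨fun i j hij => (h i).1 j hij, fun i => (h i).2⟩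

/-- trading the row-sum condition for a diagonal congruence -/
def rowEquiv {R : Type*} [CommRing R] {n : ℕ} (q : R) (f : Fin n → ℕ) (i : Fin n) :
    {v : Fin n → R // (∀ j, i ≠ j → q ^ (f j) ∣ v j) ∧ q ^ (f i) ∣ (∑ j, v j) - 1} ≃
      {w : Fin n → R // ∀ j, q ^ (f j) ∣ w j} where
  toFun v := ⟨Function.update v.1 i ((∑ j, v.1 j) - 1), by
    intro j
    by_cases h : j = i
    · subst h; rw [Function.update_self]; exact v.2.2
    · rw [Function.update_of_ne h]; exact v.2.1 j (fun hij => h hij.symm)⟩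
  invFun w := ⟨Function.update w.1 i ((w.1 i + 1) - ∑ j ∈ Finset.univ.erase i, w.1 j), by
    constructor
    · intro j hij
      rw [Function.update_of_ne hij.symm]
      exact w.2 j
    · rw [Finset.sum_update_of_mem (Finset.mem_univ i), ← Finset.erase_eq]
      have : (w.1 i + 1 - ∑ j ∈ Finset.univ.erase i, w.1 j) +
          ∑ j ∈ Finset.univ.erase i, w.1 j - 1 = w.1 i := by ring
      rw [this]
      exact w.2 i⟩
  left_inv v := by
    apply Subtype.ext
    have herase : ∑ j ∈ Finset.univ.erase i,
        Function.update v.1 i ((∑ j, v.1 j) - 1) j = ∑ j ∈ Finset.univ.erase i, v.1 j := by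
      apply Finset.sum_congr rfl
      intro j hj
      exact Function.update_of_ne (Finset.ne_of_mem_erase hj) _ _
    have hsum : ∑ j ∈ Finset.univ.erase i, v.1 j = (∑ j, v.1 j) - v.1 i := by
      rw [← Finset.sum_erase_add Finset.univ v.1 (Finset.mem_univ i)]; ring
    simp only [herase, Function.update_self, hsum]
    have : (∑ j, v.1 j) - 1 + 1 - ((∑ j, v.1 j) - v.1 i) = v.1 i := by ring
    rw [this, Function.update_idem, Function.update_eq_self]
  right_inv w := by
    apply Subtype.ext
    have hsum : ∑ j, Function.update w.1 i
        ((w.1 i + 1) - ∑ j ∈ Finset.univ.erase i, w.1 j) j = w.1 i + 1 := by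
      rw [Finset.sum_update_of_mem (Finset.mem_univ i), ← Finset.erase_eq]
      ring
    simp only [hsum]
    have : w.1 i + 1 - 1 = w.1 i := by ring
    rw [this, Function.update_idem, Function.update_eq_self]

lemma lift_cond {n N c' : ℕ} (hc' : 1 ≤ c') (hN : ∀ i j : Fin n, eexp i j * c' ≤ N)
    (m : Matrix (Fin n) (Fin n) (ZMod (p ^ N))) (hm : CondM c' ((p : ZMod (p ^ N))) m) :
    ∃ u : Matrix.GeneralLinearGroup (Fin n) ℤ_[p],
      CondM c' ((p : ℤ_[p])) (u : Matrix (Fin n) (Fin n) ℤ_[p]) ∧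
      ((Matrix.GeneralLinearGroup.map (toZModPow N) u :
        Matrix.GeneralLinearGroup (Fin n) (ZMod (p ^ N))) :
          Matrix (Fin n) (Fin n) (ZMod (p ^ N))) = m := by
  haveI : NeZero (p ^ N) := ⟨pow_ne_zero N (Fact.out (p := p.Prime)).ne_zero⟩
  set X : Matrix (Fin n) (Fin n) ℤ_[p] := Matrix.of (fun i j => ((m i j).val : ℤ_[p])) with hXdef
  have hX : ∀ i j, toZModPow N (X i j) = m i j := by
    intro i j
    simp only [hXdef, Matrix.of_apply, map_natCast, ZMod.natCast_zmod_val]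
  have hcond : CondM c' ((p : ℤ_[p])) X := by
    constructor
    · intro i j hij
      rw [← dvd_toZModPow_iff (hN i j), hX]
      exact hm.1 i j hij
    · intro i
      rw [← dvd_toZModPow_iff (hN i i), map_sub, map_sum, map_one]
      simp only [hX]
      exact hm.2 i
  have hepos : ∀ i j : Fin n, 0 < eexp i j * c' := by
    intro i j
    have h1 : 0 < eexp i j := by
      unfold eexp
      split
      · omega
      · rename_i h
        have : (i : ℕ) ≠ (j : ℕ) := fun hh => h (Fin.ext hh)
        omega
    exact Nat.mul_pos h1 hc'
  have hpdvd : ∀ i j, i ≠ j → (p : ℤ_[p]) ∣ X i j := fun i j hij =>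
    dvd_trans (dvd_pow_self _ (hepos i j).ne') (hcond.1 i j hij)
  have hdiag : ∀ i, (p : ℤ_[p]) ∣ X i i - 1 := by
    intro i
    have h1 : (p : ℤ_[p]) ∣ (∑ j, X i j) - 1 :=
      dvd_trans (dvd_pow_self _ (hepos i i).ne') (hcond.2 i)
    have h2 : (p : ℤ_[p]) ∣ ∑ j ∈ Finset.univ.erase i, X i j :=
      Finset.dvd_sum fun j hj => hpdvd i j (Ne.symm (Finset.ne_of_mem_erase hj))
    have h3 : X i i - 1 = ((∑ j, X i j) - 1) - ∑ j ∈ Finset.univ.erase i, X i j := by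
      rw [← Finset.sum_erase_add Finset.univ (X i) (Finset.mem_univ i)]; ring
    rw [h3]
    exact dvd_sub h1 h2
  have hp1 : ((p : ℕ) : ZMod (p ^ 1)) = 0 := by
    rw [pow_one]; exact ZMod.natCast_self p
  have hmap1 : X.map (⇑(toZModPow 1)) = 1 := by
    ext i j
    rw [Matrix.map_apply, Matrix.one_apply]
    by_cases h : i = j
    · subst h
      simp only [if_pos rfl]
      have hd : (p : ZMod (p ^ 1)) ∣ toZModPow 1 (X i i) - 1 := by
        have := map_dvd (toZModPow (p := p) 1) (hdiag i)
        rw [map_sub, map_one, map_natCast] at this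
        exact this
      rw [hp1, zero_dvd_iff, sub_eq_zero] at hd
      exact hd
    · simp only [if_neg h]
      have hd : (p : ZMod (p ^ 1)) ∣ toZModPow 1 (X i j) := by
        have := map_dvd (toZModPow (p := p) 1) (hpdvd i j h)
        rw [map_natCast] at this
        exact this
      rw [hp1, zero_dvd_iff] at hd
      exact hd
  have hdet : IsUnit X.det := by
    apply isUnit_of_isUnit_toZModPow (le_refl 1)
    rw [RingHom.map_det, RingHom.mapMatrix_apply, hmap1, Matrix.det_one]
    exact isUnit_one
  have hXunit : IsUnit X := (Matrix.isUnit_iff_isUnit_det X).mpr hdet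
  refine ⟨hXunit.unit, ?_, ?_⟩
  · rw [IsUnit.unit_spec]
    exact hcond
  · have : ((Matrix.GeneralLinearGroup.map (toZModPow (p := p) N) hXunit.unit :
        Matrix.GeneralLinearGroup (Fin n) (ZMod (p ^ N))) :
          Matrix (Fin n) (Fin n) (ZMod (p ^ N))) = X.map (⇑(toZModPow N)) := by
      simp [Matrix.GeneralLinearGroup.map, IsUnit.unit_spec]
    rw [this]
    ext i j
    rw [Matrix.map_apply, hX]

lemma red_entry {n N : ℕ} (g : Matrix.GeneralLinearGroup (Fin n) ℤ_[p]) (i j : Fin n) :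
    ((Matrix.GeneralLinearGroup.map (toZModPow (p := p) N) g :
      Matrix.GeneralLinearGroup (Fin n) (ZMod (p ^ N))) :
        Matrix (Fin n) (Fin n) (ZMod (p ^ N))) i j
      = toZModPow N ((g : Matrix (Fin n) (Fin n) ℤ_[p]) i j) := rfl

lemma image_lemma {n N c' : ℕ} (hc' : 1 ≤ c') (hN : ∀ i j : Fin n, eexp i j * c' ≤ N)
    (K : Subgroup (Matrix.GeneralLinearGroup (Fin n) ℤ_[p]))
    (hK : ∀ g : Matrix.GeneralLinearGroup (Fin n) ℤ_[p],
      g ∈ K ↔ CondM c' ((p : ℤ_[p])) (g : Matrix (Fin n) (Fin n) ℤ_[p])) :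
    Subgroup.comap (Matrix.GeneralLinearGroup.map (toZModPow (p := p) N))
      (K.map (Matrix.GeneralLinearGroup.map (toZModPow (p := p) N))) = K ∧
    Nat.card (K.map (Matrix.GeneralLinearGroup.map (toZModPow (p := p) N))) =
      ∏ i : Fin n, ∏ j : Fin n, p ^ (N - eexp i j * c') := by
  haveI : NeZero (p ^ N) := ⟨pow_ne_zero N (Fact.out (p := p.Prime)).ne_zero⟩
  set red := Matrix.GeneralLinearGroup.map (n := Fin n) (toZModPow (p := p) N) with hred
  -- forward transfer of the condition
  have hfwd : ∀ s, s ∈ K.map red →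
      CondM c' ((p : ZMod (p ^ N))) ((s : Matrix (Fin n) (Fin n) (ZMod (p ^ N)))) := by
    rintro s hs
    obtain ⟨g, hgK, rfl⟩ := hs
    obtain ⟨h1, h2⟩ := (hK g).mp hgK
    constructor
    · intro i j hij
      rw [red_entry]
      exact (dvd_toZModPow_iff (hN i j) _).mpr (h1 i j hij)
    · intro i
      have : (∑ j, ((red g : Matrix.GeneralLinearGroup (Fin n) (ZMod (p ^ N))) :
          Matrix (Fin n) (Fin n) (ZMod (p ^ N))) i j) - 1
          = toZModPow N ((∑ j, (g : Matrix (Fin n) (Fin n) ℤ_[p]) i j) - 1) := by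
        rw [map_sub, map_sum, map_one]
        simp only [hred, red_entry]
      rw [this]
      exact (dvd_toZModPow_iff (hN i i) _).mpr (h2 i)
  -- kernel is contained in K
  have hker : red.ker ≤ K := by
    intro g hg
    rw [MonoidHom.mem_ker] at hg
    have hval : ∀ i j, toZModPow N ((g : Matrix (Fin n) (Fin n) ℤ_[p]) i j)
        = (1 : Matrix (Fin n) (Fin n) (ZMod (p ^ N))) i j := by
      intro i j
      rw [← red_entry, hg]
      rfl
    rw [hK]
    constructor
    · intro i j hij
      rw [← dvd_toZModPow_iff (hN i j), hval i j, Matrix.one_apply, if_neg hij]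
      exact dvd_zero _
    · intro i
      rw [← dvd_toZModPow_iff (hN i i), map_sub, map_sum, map_one]
      simp only [hval]
      have : (∑ j, (1 : Matrix (Fin n) (Fin n) (ZMod (p ^ N))) i j) = 1 := by
        simp [Matrix.one_apply]
      rw [this, sub_self]
      exact dvd_zero _
  constructor
  · rw [Subgroup.comap_map_eq, sup_of_le_left hker]
  -- cardinality
  set R := ZMod (p ^ N) with hR
  set T := {mm : Fin n → Fin n → R //
    ∀ i, (∀ j, i ≠ j → (p : R) ^ (eexp i j * c') ∣ mm i j) ∧
      (p : R) ^ (eexp i i * c') ∣ (∑ j, mm i j) - 1} with hT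
  have hbij : ∃ φ : ↥(K.map red) → T, Function.Bijective φ := by
    refine ⟨fun s => ⟨fun i j => ((s.1 : Matrix (Fin n) (Fin n) R)) i j,
      (condM_iff_rows c' _ _).mp (hfwd s.1 s.2)⟩, ?_, ?_⟩
    · intro s t heq
      have : ∀ i j, ((s.1 : Matrix (Fin n) (Fin n) R)) i j
          = ((t.1 : Matrix (Fin n) (Fin n) R)) i j := by
        intro i j
        exact congrFun (congrFun (congrArg Subtype.val heq) i) j
      exact Subtype.ext (Units.ext (by ext i j; exact this i j))
    · rintro ⟨mm, hmm⟩
      obtain ⟨u, hu, hured⟩ := lift_cond hc' hN (Matrix.of mm)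
        ((condM_iff_rows c' _ (Matrix.of mm)).mpr hmm)
      refine ⟨⟨red u, Subgroup.mem_map_of_mem red ((hK u).mpr hu)⟩, ?_⟩
      apply Subtype.ext
      funext i j
      exact congrFun (congrFun hured i) j
  obtain ⟨φ, hφ⟩ := hbij
  rw [Nat.card_eq_of_bijective φ hφ]
  have step1 : Nat.card T = ∏ i : Fin n, Nat.card {v : Fin n → R //
      (∀ j, i ≠ j → (p : R) ^ (eexp i j * c') ∣ v j) ∧
        (p : R) ^ (eexp i i * c') ∣ (∑ j, v j) - 1} := by
    rw [Nat.card_congr (Equiv.subtypePiEquivPi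
      (p := fun i (v : Fin n → R) => (∀ j, i ≠ j → (p : R) ^ (eexp i j * c') ∣ v j) ∧
        (p : R) ^ (eexp i i * c') ∣ (∑ j, v j) - 1)), Nat.card_pi]
  rw [step1]
  apply Finset.prod_congr rfl
  intro i _
  rw [Nat.card_congr (rowEquiv (p : R) (fun j => eexp i j * c') i),
    Nat.card_congr (Equiv.subtypePiEquivPi
      (p := fun j (x : R) => (p : R) ^ (eexp i j * c') ∣ x)), Nat.card_pi]
  apply Finset.prod_congr rfl
  intro j _
  exact card_dvd_subtype (hN i j)

def nexp (a b : ℕ) : ℕ := if a = b then a + 1 else ((a : ℤ) - (b : ℤ)).natAbs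

lemma eexp_eq {n : ℕ} (i j : Fin n) : eexp i j = nexp (i : ℕ) (j : ℕ) := by
  unfold eexp nexp
  rcases eq_or_ne i j with rfl | h
  · simp
  · rw [if_neg h, if_neg (fun hh => h (Fin.ext hh))]

lemma gauss_aux (m : ℕ) : 2 * (∑ k ∈ Finset.range m, (m - k)) = m * m + m := by
  induction m with
  | zero => simp
  | succ t iht =>
    have hstep : ∑ k ∈ Finset.range (t + 1), (t + 1 - k)
        = (∑ k ∈ Finset.range t, (t - k)) + (t + 1) := by
      rw [Finset.sum_range_succ]
      have hcg : ∀ k ∈ Finset.range t, t + 1 - k = (t - k) + 1 := fun k hk => by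
        rw [Finset.mem_range] at hk; omega
      rw [Finset.sum_congr rfl hcg, Finset.sum_add_distrib, Finset.sum_const,
        Finset.card_range, smul_eq_mul, mul_one]
      omega
    rw [hstep]
    set S := ∑ k ∈ Finset.range t, (t - k) with hS
    zify at iht ⊢
    linear_combination iht

lemma six_mul_sum' (n : ℕ) :
    6 * (∑ i ∈ Finset.range n, ∑ j ∈ Finset.range n, nexp i j)
      = n * (n + 1) * (2 * n + 1) := by
  induction n with
  | zero => simp
  | succ m ih =>
    have hrow : ∀ k ∈ Finset.range m, nexp m k = m - k := by
      intro k hk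
      rw [Finset.mem_range] at hk
      unfold nexp
      rw [if_neg (by omega)]
      omega
    have hcol : ∀ k ∈ Finset.range m, nexp k m = m - k := by
      intro k hk
      rw [Finset.mem_range] at hk
      unfold nexp
      rw [if_neg (by omega)]
      omega
    have hdiag : nexp m m = m + 1 := by unfold nexp; rw [if_pos rfl]
    have hsplit : ∀ i ∈ Finset.range m, ∑ j ∈ Finset.range (m + 1), nexp i j
        = (∑ j ∈ Finset.range m, nexp i j) + nexp i m :=
      fun i _ => Finset.sum_range_succ _ m
    rw [Finset.sum_range_succ, Finset.sum_congr rfl hsplit, Finset.sum_add_distrib,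
      Finset.sum_range_succ (fun j => nexp m j) m, Finset.sum_congr rfl hcol,
      Finset.sum_congr rfl hrow, hdiag]
    set S := ∑ i ∈ Finset.range m, ∑ j ∈ Finset.range m, nexp i j with hSdef
    set A := ∑ k ∈ Finset.range m, (m - k) with hAdef
    have hA := gauss_aux m
    rw [← hAdef] at hA
    zify at ih hA ⊢
    linear_combination ih + 6 * hA

lemma six_mul_sum {n : ℕ} :
    6 * (∑ i : Fin n, ∑ j : Fin n, eexp i j) = n * (n + 1) * (2 * n + 1) := by
  have h1 : (∑ i : Fin n, ∑ j : Fin n, eexp i j)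
      = ∑ i ∈ Finset.range n, ∑ j ∈ Finset.range n, nexp i j := by
    have h2 : ∀ i : Fin n, ∑ j : Fin n, eexp i j = ∑ j ∈ Finset.range n, nexp (i : ℕ) j := by
      intro i
      rw [Finset.sum_congr rfl (fun j _ => eexp_eq i j)]
      exact Fin.sum_univ_eq_sum_range (fun b => nexp (i : ℕ) b) n
    rw [Finset.sum_congr rfl (fun i _ => h2 i)]
    exact Fin.sum_univ_eq_sum_range (fun a => ∑ j ∈ Finset.range n, nexp a j) n
  rw [h1, six_mul_sum']

/-- The congruence conditions define subgroups `K_c ⊆ GL_n(ℤ_p)` with `K_{c+1} ⊆ K_c`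
of index `p^{n(n+1)(2n+1)/6}`. -/
theorem stmt13 (p : ℕ) [Fact p.Prime] (c n : ℕ) (hc : 1 ≤ c) (hn : 0 < n)
    (Kc Kc1 : Subgroup (Matrix.GeneralLinearGroup (Fin n) ℤ_[p]))
    (hKc : ∀ g : Matrix.GeneralLinearGroup (Fin n) ℤ_[p], g ∈ Kc ↔
      ((∀ i j : Fin n, i ≠ j →
        ((p : ℤ_[p]) ^ ((((i : ℕ) : ℤ) - ((j : ℕ) : ℤ)).natAbs * c)) ∣
          (g : Matrix (Fin n) (Fin n) ℤ_[p]) i j)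
      ∧ ∀ i : Fin n, ((p : ℤ_[p]) ^ (((i : ℕ) + 1) * c)) ∣
          ((∑ j, (g : Matrix (Fin n) (Fin n) ℤ_[p]) i j) - 1)))
    (hKc1 : ∀ g : Matrix.GeneralLinearGroup (Fin n) ℤ_[p], g ∈ Kc1 ↔
      ((∀ i j : Fin n, i ≠ j →
        ((p : ℤ_[p]) ^ ((((i : ℕ) : ℤ) - ((j : ℕ) : ℤ)).natAbs * (c + 1))) ∣
          (g : Matrix (Fin n) (Fin n) ℤ_[p]) i j)
      ∧ ∀ i : Fin n, ((p : ℤ_[p]) ^ (((i : ℕ) + 1) * (c + 1))) ∣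
          ((∑ j, (g : Matrix (Fin n) (Fin n) ℤ_[p]) i j) - 1))) :
    Kc1 ≤ Kc ∧ (Kc1.subgroupOf Kc).index = p ^ (n * (n + 1) * (2 * n + 1) / 6) := by
  -- restate the hypotheses via `CondM`
  have hKc' : ∀ g : Matrix.GeneralLinearGroup (Fin n) ℤ_[p],
      g ∈ Kc ↔ CondM c ((p : ℤ_[p])) (g : Matrix (Fin n) (Fin n) ℤ_[p]) := by
    intro g
    rw [hKc]
    constructor
    · rintro ⟨h1, h2⟩
      refine ⟨fun i j hij => ?_, fun i => ?_⟩
      · simp only [eexp, if_neg hij]; exact h1 i j hij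
      · simp only [eexp, if_pos rfl]; exact h2 i
    · rintro ⟨h1, h2⟩
      refine ⟨fun i j hij => ?_, fun i => ?_⟩
      · have := h1 i j hij; simp only [eexp, if_neg hij] at this; exact this
      · have := h2 i; simp only [eexp, if_pos rfl] at this; exact this
  have hKc1' : ∀ g : Matrix.GeneralLinearGroup (Fin n) ℤ_[p],
      g ∈ Kc1 ↔ CondM (c + 1) ((p : ℤ_[p])) (g : Matrix (Fin n) (Fin n) ℤ_[p]) := by
    intro g
    rw [hKc1]
    constructor
    · rintro ⟨h1, h2⟩
      refine ⟨fun i j hij => ?_, fun i => ?_⟩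
      · simp only [eexp, if_neg hij]; exact h1 i j hij
      · simp only [eexp, if_pos rfl]; exact h2 i
    · rintro ⟨h1, h2⟩
      refine ⟨fun i j hij => ?_, fun i => ?_⟩
      · have := h1 i j hij; simp only [eexp, if_neg hij] at this; exact this
      · have := h2 i; simp only [eexp, if_pos rfl] at this; exact this
  -- part 1
  have hle : Kc1 ≤ Kc := by
    intro g hg
    obtain ⟨h1, h2⟩ := (hKc1' g).mp hg
    rw [hKc' g]
    exact ⟨fun i j hij => dvd_trans (pow_dvd_pow _ (Nat.mul_le_mul le_rfl (by omega))) (h1 i j hij),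
      fun i => dvd_trans (pow_dvd_pow _ (Nat.mul_le_mul le_rfl (by omega))) (h2 i)⟩
  refine ⟨hle, ?_⟩
  -- part 2
  set N := n * (c + 1) with hNdef
  have heb : ∀ i j : Fin n, eexp i j ≤ n := by
    intro i j
    have hi := i.isLt
    have hj := j.isLt
    simp only [eexp]
    split <;> omega
  have hNc : ∀ i j : Fin n, eexp i j * c ≤ N := fun i j =>
    le_trans (Nat.mul_le_mul (heb i j) (by omega)) le_rfl
  have hNc1 : ∀ i j : Fin n, eexp i j * (c + 1) ≤ N := fun i j =>
    Nat.mul_le_mul (heb i j) le_rfl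
  obtain ⟨hcomapc, hcardc⟩ := image_lemma (p := p) hc hNc Kc hKc'
  obtain ⟨hcomap1, hcard1⟩ := image_lemma (p := p) (by omega) hNc1 Kc1 hKc1'
  set red := Matrix.GeneralLinearGroup.map (n := Fin n) (toZModPow (p := p) N) with hredd
  haveI : NeZero (p ^ N) := ⟨pow_ne_zero N (Fact.out (p := p.Prime)).ne_zero⟩
  -- transfer the index to the finite quotient
  have hrel : Kc1.relIndex Kc = (Kc1.map red).relIndex (Kc.map red) := by
    conv_lhs => rw [← hcomap1]
    rw [Subgroup.relIndex_comap]
  have hmaple : Kc1.map red ≤ Kc.map red := Subgroup.map_mono hle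
  have hcardpos : 0 < Nat.card (Kc1.map red) := Nat.card_pos
  have key : (Kc1.map red).relIndex (Kc.map red) * Nat.card (Kc1.map red)
      = Nat.card (Kc.map red) := by
    have h1 : ((Kc1.map red).subgroupOf (Kc.map red)).index
        * Nat.card ((Kc1.map red).subgroupOf (Kc.map red)) = Nat.card (Kc.map red) :=
      Subgroup.index_mul_card _
    have h2 : Nat.card ((Kc1.map red).subgroupOf (Kc.map red)) = Nat.card (Kc1.map red) :=
      Nat.card_congr (Subgroup.subgroupOfEquivOfLe hmaple).toEquiv
    rw [← h2]
    exact h1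
  -- cardinalities as powers of p
  have hprodc : Nat.card (Kc.map red) = p ^ (∑ i : Fin n, ∑ j : Fin n, (N - eexp i j * c)) := by
    rw [hcardc]
    rw [← Finset.prod_pow_eq_pow_sum]
    exact Finset.prod_congr rfl fun i _ => (Finset.prod_pow_eq_pow_sum _ _ _)
  have hprod1 : Nat.card (Kc1.map red)
      = p ^ (∑ i : Fin n, ∑ j : Fin n, (N - eexp i j * (c + 1))) := by
    rw [hcard1]
    rw [← Finset.prod_pow_eq_pow_sum]
    exact Finset.prod_congr rfl fun i _ => (Finset.prod_pow_eq_pow_sum _ _ _)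
  set E := ∑ i : Fin n, ∑ j : Fin n, eexp i j with hEdef
  have hAB : (∑ i : Fin n, ∑ j : Fin n, (N - eexp i j * c))
      = (∑ i : Fin n, ∑ j : Fin n, (N - eexp i j * (c + 1))) + E := by
    rw [hEdef, ← Finset.sum_add_distrib]
    apply Finset.sum_congr rfl
    intro i _
    rw [← Finset.sum_add_distrib]
    apply Finset.sum_congr rfl
    intro j _
    have h1 := hNc1 i j
    have h2 : eexp i j * (c + 1) = eexp i j * c + eexp i j := by ring
    omega
  have hppos : 0 < p := (Fact.out (p := p.Prime)).pos
  have hEval : (Kc1.map red).relIndex (Kc.map red) = p ^ E := by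
    have hcalc : (Kc1.map red).relIndex (Kc.map red)
        * p ^ (∑ i : Fin n, ∑ j : Fin n, (N - eexp i j * (c + 1)))
        = p ^ E * p ^ (∑ i : Fin n, ∑ j : Fin n, (N - eexp i j * (c + 1))) := by
      calc (Kc1.map red).relIndex (Kc.map red)
          * p ^ (∑ i : Fin n, ∑ j : Fin n, (N - eexp i j * (c + 1)))
          = (Kc1.map red).relIndex (Kc.map red) * Nat.card (Kc1.map red) := by rw [hprod1]
        _ = Nat.card (Kc.map red) := key
        _ = p ^ E * p ^ (∑ i : Fin n, ∑ j : Fin n, (N - eexp i j * (c + 1))) := by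
            rw [hprodc, hAB, pow_add, mul_comm]
    exact Nat.eq_of_mul_eq_mul_right (Nat.pow_pos hppos) hcalc
  have hfinal : E = n * (n + 1) * (2 * n + 1) / 6 := by
    have h6 : 6 * E = n * (n + 1) * (2 * n + 1) := six_mul_sum
    omega
  show Kc1.relIndex Kc = _
  rw [hrel, hEval, hfinal]
end

section
/- Let N be a positive integer and x, y ∈ ℤ_p ∩ ℚ_p^× nonzero p-adic integers. With [x]_N = diag(x^{N-1}, ..., x, 1), the operator 𝚅^x = ∑_{u} π(u[x]_N) (sum over u ∈ U(ℤ_p)/(U(ℤ_p) ∩ [x]_N U(ℤ_p) [x]_N^{-1})) on the U(ℤ_p)-invariants of a smooth representation π of GL_N(ℚ_p) is well-defined (independent of the choice of coset representatives), and satisfies 𝚅^{xy} = 𝚅^x ∘ 𝚅^y. -/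
lemma transversal_sum {G M : Type*} [Group G] [AddCommMonoid M]
    (H : Subgroup G) (s t : Finset G) (f : G → M)
    (hst : ∀ a ∈ s, ∃! b, b ∈ t ∧ b⁻¹ * a ∈ H)
    (hts : ∀ b ∈ t, ∃! a, a ∈ s ∧ a⁻¹ * b ∈ H)
    (hf : ∀ a ∈ s, ∀ b ∈ t, a⁻¹ * b ∈ H → f a = f b) :
    ∑ a ∈ s, f a = ∑ b ∈ t, f b := by
  refine Finset.sum_bij (fun a ha => (hst a ha).choose) ?_ ?_ ?_ ?_
  · exact fun a ha => ((hst a ha).choose_spec.1).1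
  · intro a₁ ha₁ a₂ ha₂ h
    obtain ⟨⟨hb₁t, hb₁⟩, -⟩ := (hst a₁ ha₁).choose_spec
    obtain ⟨⟨hb₂t, hb₂⟩, -⟩ := (hst a₂ ha₂).choose_spec
    dsimp only at h
    rw [h] at hb₁
    exact (hts _ hb₂t).unique ⟨ha₁, by simpa using inv_mem hb₁⟩ ⟨ha₂, by simpa using inv_mem hb₂⟩
  · intro b hb
    obtain ⟨⟨has, hab⟩, -⟩ := (hts b hb).choose_spec
    exact ⟨_, has, ((hst _ has).choose_spec.2 b ⟨hb, by simpa using inv_mem hab⟩).symm⟩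
  · intro a ha
    obtain ⟨⟨hbt, hba⟩, -⟩ := (hst a ha).choose_spec
    exact hf a ha _ hbt (by simpa using inv_mem hba)

/-- The ordinary Hecke operator `𝚅^x = ∑_u π(u [x]_N)` on `U(ℤ_p)`-invariant vectors is
well defined (independent of coset representatives), preserves the invariants, and
satisfies `𝚅^{xy} = 𝚅^x ∘ 𝚅^y`. -/
theorem stmt14 (p : ℕ) [Fact p.Prime] (N : ℕ) (hN : 0 < N)
    (L V : Type*) [Field L] [CharZero L] [AddCommGroup V] [Module L V]
    (π : Matrix.GeneralLinearGroup (Fin N) ℚ_[p] →* (V →ₗ[L] V))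
    (UZ : Subgroup (Matrix.GeneralLinearGroup (Fin N) ℚ_[p]))
    (hUZ : ∀ g, g ∈ UZ ↔
      (∀ i j : Fin N, ‖(g : Matrix (Fin N) (Fin N) ℚ_[p]) i j‖ ≤ 1)
      ∧ (∀ i j : Fin N, (j : ℕ) < (i : ℕ) → (g : Matrix (Fin N) (Fin N) ℚ_[p]) i j = 0)
      ∧ (∀ i : Fin N, (g : Matrix (Fin N) (Fin N) ℚ_[p]) i i = 1))
    (x y : ℚ_[p]) (hx : ‖x‖ ≤ 1 ∧ x ≠ 0) (hy : ‖y‖ ≤ 1 ∧ y ≠ 0)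
    (tx ty txy : Matrix.GeneralLinearGroup (Fin N) ℚ_[p])
    (htx : ∀ i j : Fin N, (tx : Matrix (Fin N) (Fin N) ℚ_[p]) i j
      = if i = j then x ^ (N - 1 - (i : ℕ)) else 0)
    (hty : ∀ i j : Fin N, (ty : Matrix (Fin N) (Fin N) ℚ_[p]) i j
      = if i = j then y ^ (N - 1 - (i : ℕ)) else 0)
    (htxy : ∀ i j : Fin N, (txy : Matrix (Fin N) (Fin N) ℚ_[p]) i j
      = if i = j then (x * y) ^ (N - 1 - (i : ℕ)) else 0)
    (Ux Uy Uxy : Subgroup (Matrix.GeneralLinearGroup (Fin N) ℚ_[p]))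
    (hUx : ∀ g, g ∈ Ux ↔ g ∈ UZ ∧ tx⁻¹ * g * tx ∈ UZ)
    (hUy : ∀ g, g ∈ Uy ↔ g ∈ UZ ∧ ty⁻¹ * g * ty ∈ UZ)
    (hUxy : ∀ g, g ∈ Uxy ↔ g ∈ UZ ∧ txy⁻¹ * g * txy ∈ UZ)
    (v : V) (hv : ∀ u ∈ UZ, π u v = v)
    (s₁ s₂ sy sxy : Finset (Matrix.GeneralLinearGroup (Fin N) ℚ_[p]))
    (hs₁ : (∀ r ∈ s₁, r ∈ UZ) ∧ ∀ u ∈ UZ, ∃! r, r ∈ s₁ ∧ r⁻¹ * u ∈ Ux)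
    (hs₂ : (∀ r ∈ s₂, r ∈ UZ) ∧ ∀ u ∈ UZ, ∃! r, r ∈ s₂ ∧ r⁻¹ * u ∈ Ux)
    (hsy : (∀ r ∈ sy, r ∈ UZ) ∧ ∀ u ∈ UZ, ∃! r, r ∈ sy ∧ r⁻¹ * u ∈ Uy)
    (hsxy : (∀ r ∈ sxy, r ∈ UZ) ∧ ∀ u ∈ UZ, ∃! r, r ∈ sxy ∧ r⁻¹ * u ∈ Uxy) :
    (∑ r ∈ s₁, π (r * tx) v = ∑ r ∈ s₂, π (r * tx) v)
    ∧ (∀ u ∈ UZ, π u (∑ r ∈ s₁, π (r * tx) v) = ∑ r ∈ s₁, π (r * tx) v)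
    ∧ (∑ r ∈ sxy, π (r * txy) v
        = ∑ r ∈ s₁, ∑ r' ∈ sy, π (r * tx * (r' * ty)) v) := by
  classical
  -- scalar key lemma
  have key : ∀ (z : ℚ_[p]), z ≠ 0 → ∀ i j : Fin N, (i : ℕ) < (j : ℕ) →
      z ^ (N - 1 - (i : ℕ)) * (z ^ (N - 1 - (j : ℕ)))⁻¹ = z ^ ((j : ℕ) - (i : ℕ)) := by
    intro z hz i j hij
    have hjN : (j : ℕ) < N := j.2
    have h : N - 1 - (i : ℕ) = (N - 1 - (j : ℕ)) + ((j : ℕ) - (i : ℕ)) := by omega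
    rw [h, pow_add, mul_comm (z ^ (N - 1 - (j:ℕ))), mul_assoc,
      mul_inv_cancel₀ (pow_ne_zero _ hz), mul_one]
  -- diagonal descriptions
  have diag_of : ∀ (z : ℚ_[p]) (t : GL (Fin N) ℚ_[p]),
      (∀ i j : Fin N, (t : Matrix (Fin N) (Fin N) ℚ_[p]) i j
        = if i = j then z ^ (N - 1 - (i : ℕ)) else 0) →
      (t : Matrix (Fin N) (Fin N) ℚ_[p])
        = Matrix.diagonal (fun i : Fin N => z ^ (N - 1 - (i : ℕ))) := by
    intro z t ht
    ext i j
    rw [ht, Matrix.diagonal_apply]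
  have inv_diag : ∀ (z : ℚ_[p]), z ≠ 0 → ∀ (t : GL (Fin N) ℚ_[p]),
      (t : Matrix (Fin N) (Fin N) ℚ_[p])
        = Matrix.diagonal (fun i : Fin N => z ^ (N - 1 - (i : ℕ))) →
      ((t⁻¹ : GL (Fin N) ℚ_[p]) : Matrix (Fin N) (Fin N) ℚ_[p])
        = Matrix.diagonal (fun i : Fin N => (z ^ (N - 1 - (i : ℕ)))⁻¹) := by
    intro z hz t ht
    have h2 : (t : Matrix (Fin N) (Fin N) ℚ_[p])
        * Matrix.diagonal (fun i : Fin N => (z ^ (N - 1 - (i : ℕ)))⁻¹) = 1 := by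
      rw [ht, Matrix.diagonal_mul_diagonal]
      have : (fun i : Fin N => z ^ (N - 1 - (i : ℕ)) * (z ^ (N - 1 - (i : ℕ)))⁻¹)
          = fun _ => (1 : ℚ_[p]) := by
        funext i; exact mul_inv_cancel₀ (pow_ne_zero _ hz)
      rw [this, Matrix.diagonal_one]
    calc ((t⁻¹ : GL (Fin N) ℚ_[p]) : Matrix (Fin N) (Fin N) ℚ_[p])
        = ((t⁻¹ : GL (Fin N) ℚ_[p]) : Matrix (Fin N) (Fin N) ℚ_[p]) * ((t : Matrix (Fin N) (Fin N) ℚ_[p])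
            * Matrix.diagonal (fun i : Fin N => (z ^ (N - 1 - (i : ℕ)))⁻¹)) := by
          rw [h2, mul_one]
      _ = (((t⁻¹ : GL (Fin N) ℚ_[p]) : Matrix (Fin N) (Fin N) ℚ_[p]) * (t : Matrix (Fin N) (Fin N) ℚ_[p]))
            * Matrix.diagonal (fun i : Fin N => (z ^ (N - 1 - (i : ℕ)))⁻¹) := by
          rw [mul_assoc]
      _ = Matrix.diagonal (fun i : Fin N => (z ^ (N - 1 - (i : ℕ)))⁻¹) := by
          rw [Units.inv_mul, one_mul]
  have htxd := diag_of x tx htx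
  have htyd := diag_of y ty hty
  have htxyd := diag_of (x * y) txy htxy
  have htxinv := inv_diag x hx.2 tx htxd
  have htyinv := inv_diag y hy.2 ty htyd
  have htxyinv := inv_diag (x * y) (mul_ne_zero hx.2 hy.2) txy htxyd
  -- txy = tx * ty
  have htxty : txy = tx * ty := by
    apply Units.ext
    show (txy : Matrix (Fin N) (Fin N) ℚ_[p]) = ((tx * ty : GL (Fin N) ℚ_[p]) : Matrix (Fin N) (Fin N) ℚ_[p])
    rw [Units.val_mul, htxd, htyd, htxyd, Matrix.diagonal_mul_diagonal]
    ext i j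
    simp [Matrix.diagonal_apply, mul_pow]
  -- contraction: tx * g * tx⁻¹ ∈ UZ for g ∈ UZ
  have conj_mem : ∀ g ∈ UZ, tx * g * tx⁻¹ ∈ UZ := by
    intro g hg
    obtain ⟨hg1, hg2, hg3⟩ := (hUZ g).1 hg
    have hE : ∀ i j : Fin N, ((tx * g * tx⁻¹ : GL (Fin N) ℚ_[p]) : Matrix (Fin N) (Fin N) ℚ_[p]) i j
        = x ^ (N - 1 - (i : ℕ)) * (g : Matrix (Fin N) (Fin N) ℚ_[p]) i j
          * (x ^ (N - 1 - (j : ℕ)))⁻¹ := by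
      intro i j
      rw [Units.val_mul, Units.val_mul, htxd, htxinv, Matrix.mul_diagonal, Matrix.diagonal_mul]
    rw [hUZ]
    refine ⟨?_, ?_, ?_⟩
    · intro i j
      rcases lt_trichotomy (j : ℕ) (i : ℕ) with h | h | h
      · rw [hE, hg2 i j h, mul_zero, zero_mul, norm_zero]; norm_num
      · have hij : i = j := Fin.ext h.symm
        subst hij
        rw [hE, hg3, mul_one, mul_inv_cancel₀ (pow_ne_zero _ hx.2), norm_one]
      · rw [hE, mul_comm (x ^ (N - 1 - (i:ℕ))), mul_assoc, key x hx.2 i j h, norm_mul, norm_pow]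
        exact mul_le_one₀ (hg1 i j) (pow_nonneg (norm_nonneg x) _)
          (pow_le_one₀ (norm_nonneg x) hx.1)
    · intro i j h
      rw [hE, hg2 i j h, mul_zero, zero_mul]
    · intro i
      rw [hE, hg3, mul_one, mul_inv_cancel₀ (pow_ne_zero _ hx.2)]
  -- Uxy ⊆ Ux
  have hsub : ∀ g ∈ Uxy, g ∈ Ux := by
    intro g hg
    obtain ⟨hgZ, hgc⟩ := (hUxy g).1 hg
    obtain ⟨hg1, hg2, hg3⟩ := (hUZ g).1 hgZ
    obtain ⟨hc1, hc2, hc3⟩ := (hUZ _).1 hgc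
    have hF : ∀ i j : Fin N, ((txy⁻¹ * g * txy : GL (Fin N) ℚ_[p]) : Matrix (Fin N) (Fin N) ℚ_[p]) i j
        = ((x*y) ^ (N - 1 - (i : ℕ)))⁻¹ * (g : Matrix (Fin N) (Fin N) ℚ_[p]) i j
          * ((x*y) ^ (N - 1 - (j : ℕ))) := by
      intro i j
      rw [Units.val_mul, Units.val_mul, htxyd, htxyinv, Matrix.mul_diagonal, Matrix.diagonal_mul]
    have hE : ∀ i j : Fin N, ((tx⁻¹ * g * tx : GL (Fin N) ℚ_[p]) : Matrix (Fin N) (Fin N) ℚ_[p]) i j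
        = (x ^ (N - 1 - (i : ℕ)))⁻¹ * (g : Matrix (Fin N) (Fin N) ℚ_[p]) i j
          * (x ^ (N - 1 - (j : ℕ))) := by
      intro i j
      rw [Units.val_mul, Units.val_mul, htxd, htxinv, Matrix.mul_diagonal, Matrix.diagonal_mul]
    rw [hUx]
    refine ⟨hgZ, ?_⟩
    rw [hUZ]
    refine ⟨?_, ?_, ?_⟩
    · intro i j
      rcases lt_trichotomy (j : ℕ) (i : ℕ) with h | h | h
      · rw [hE, hg2 i j h, mul_zero, zero_mul, norm_zero]; norm_num
      · have hij : i = j := Fin.ext h.symm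
        subst hij
        rw [hE, hg3, mul_one, inv_mul_cancel₀ (pow_ne_zero _ hx.2), norm_one]
      · have halg : (x ^ (N - 1 - (i : ℕ)))⁻¹ * (g : Matrix (Fin N) (Fin N) ℚ_[p]) i j
            * (x ^ (N - 1 - (j : ℕ)))
            = (((x*y) ^ (N - 1 - (i : ℕ)))⁻¹ * (g : Matrix (Fin N) (Fin N) ℚ_[p]) i j
              * ((x*y) ^ (N - 1 - (j : ℕ))))
              * (y ^ (N - 1 - (i : ℕ)) * (y ^ (N - 1 - (j : ℕ)))⁻¹) := by
          have hx0 : x ≠ 0 := hx.2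
          have hy0 : y ≠ 0 := hy.2
          rw [mul_pow, mul_pow, mul_inv]
          field_simp
        rw [hE, halg, key y hy.2 i j h, norm_mul, norm_pow, ← hF i j]
        exact mul_le_one₀ (hc1 i j) (pow_nonneg (norm_nonneg y) _)
          (pow_le_one₀ (norm_nonneg y) hy.1)
    · intro i j h
      rw [hE, hg2 i j h, mul_zero, zero_mul]
    · intro i
      rw [hE, hg3, mul_one, inv_mul_cancel₀ (pow_ne_zero _ hx.2)]
  -- value lemma
  have val_eq : ∀ (t a b : GL (Fin N) ℚ_[p]), t⁻¹ * (a⁻¹ * b) * t ∈ UZ → π (b * t) v = π (a * t) v := by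
    intro t a b hw
    have h : b * t = (a * t) * (t⁻¹ * (a⁻¹ * b) * t) := by group
    rw [h, map_mul, Module.End.mul_apply, hv _ hw]
  -- Part 1
  have part1 : ∑ r ∈ s₁, π (r * tx) v = ∑ r ∈ s₂, π (r * tx) v := by
    refine transversal_sum Ux s₁ s₂ (fun g => π (g * tx) v) ?_ ?_ ?_
    · exact fun a ha => hs₂.2 a (hs₁.1 a ha)
    · exact fun b hb => hs₁.2 b (hs₂.1 b hb)
    · intro a _ b _ hab
      exact (val_eq tx a b ((hUx _).1 hab).2).symm
  refine ⟨part1, ?_, ?_⟩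
  -- Part 2
  · intro u hu
    rw [map_sum]
    have hterm : ∀ r : GL (Fin N) ℚ_[p], π u (π (r * tx) v) = π ((u * r) * tx) v := by
      intro r
      rw [← Module.End.mul_apply, ← map_mul, mul_assoc]
    simp only [hterm]
    have himg : ∑ r ∈ s₁, π ((u * r) * tx) v
        = ∑ a ∈ s₁.image (fun r => u * r), π (a * tx) v := by
      rw [Finset.sum_image (fun a _ b _ h => mul_left_cancel h)]
    rw [himg]
    refine transversal_sum Ux _ s₁ (fun g => π (g * tx) v) ?_ ?_ ?_
    · intro a ha
      obtain ⟨r, hr, rfl⟩ := Finset.mem_image.1 ha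
      exact hs₁.2 _ (mul_mem hu (hs₁.1 r hr))
    · intro b hb
      obtain ⟨r, ⟨hr, hrb⟩, hruniq⟩ := hs₁.2 (u⁻¹ * b) (mul_mem (inv_mem hu) (hs₁.1 b hb))
      refine ⟨u * r, ⟨Finset.mem_image_of_mem _ hr, ?_⟩, ?_⟩
      · have : (u * r)⁻¹ * b = r⁻¹ * (u⁻¹ * b) := by group
        rw [this]; exact hrb
      · rintro a ⟨ha, hab⟩
        obtain ⟨r', hr', rfl⟩ := Finset.mem_image.1 ha
        have : r'⁻¹ * (u⁻¹ * b) ∈ Ux := by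
          have h : r'⁻¹ * (u⁻¹ * b) = (u * r')⁻¹ * b := by group
          rw [h]; exact hab
        rw [hruniq r' ⟨hr', this⟩]
    · intro a _ b _ hab
      exact (val_eq tx a b ((hUx _).1 hab).2).symm
  -- Part 3
  · -- pair lemma
    have P : ∀ u ∈ UZ, ∃! q : GL (Fin N) ℚ_[p] × GL (Fin N) ℚ_[p], (q.1 ∈ s₁ ∧ q.2 ∈ sy)
        ∧ (q.1 * (tx * q.2 * tx⁻¹))⁻¹ * u ∈ Uxy := by
      intro u hu
      obtain ⟨r, ⟨hr₁, hrx⟩, hruniq⟩ := hs₁.2 u hu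
      have h1 : tx⁻¹ * (r⁻¹ * u) * tx ∈ UZ := ((hUx _).1 hrx).2
      obtain ⟨r', ⟨hr'₁, hr'y⟩, hr'uniq⟩ := hsy.2 _ h1
      refine ⟨(r, r'), ⟨⟨hr₁, hr'₁⟩, ?_⟩, ?_⟩
      · have heq : (r * (tx * r' * tx⁻¹))⁻¹ * u
            = tx * (r'⁻¹ * (tx⁻¹ * (r⁻¹ * u) * tx)) * tx⁻¹ := by group
        rw [heq, hUxy]
        obtain ⟨hkZ, hky⟩ := (hUy _).1 hr'y
        refine ⟨conj_mem _ hkZ, ?_⟩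
        have h2 : txy⁻¹ * (tx * (r'⁻¹ * (tx⁻¹ * (r⁻¹ * u) * tx)) * tx⁻¹) * txy
            = ty⁻¹ * (r'⁻¹ * (tx⁻¹ * (r⁻¹ * u) * tx)) * ty := by
          rw [htxty]; group
        rw [h2]
        exact hky
      · rintro ⟨a, b⟩ ⟨⟨ha, hb⟩, hab⟩
        have hw : (a * (tx * b * tx⁻¹))⁻¹ * u ∈ Uxy := hab
        have hwx : (a * (tx * b * tx⁻¹))⁻¹ * u ∈ Ux := hsub _ hw
        obtain ⟨hwZ, hw'⟩ := (hUx _).1 hwx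
        have hau : a⁻¹ * u = (tx * b * tx⁻¹) * ((a * (tx * b * tx⁻¹))⁻¹ * u) := by group
        have haux : a⁻¹ * u ∈ Ux := by
          rw [hUx]
          constructor
          · rw [hau]
            exact mul_mem (conj_mem b (hsy.1 b hb)) hwZ
          · have h3 : tx⁻¹ * (a⁻¹ * u) * tx
                = b * (tx⁻¹ * ((a * (tx * b * tx⁻¹))⁻¹ * u) * tx) := by
              rw [hau]; group
            rw [h3]
            exact mul_mem (hsy.1 b hb) hw'
        have ha_eq : a = r := hruniq a ⟨ha, haux⟩
        have hbk : b⁻¹ * (tx⁻¹ * (r⁻¹ * u) * tx) ∈ Uy := by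
          rw [← ha_eq]
          have h4 : b⁻¹ * (tx⁻¹ * (a⁻¹ * u) * tx)
              = tx⁻¹ * ((a * (tx * b * tx⁻¹))⁻¹ * u) * tx := by group
          rw [h4, hUy]
          refine ⟨hw', ?_⟩
          have h5 : ty⁻¹ * (tx⁻¹ * ((a * (tx * b * tx⁻¹))⁻¹ * u) * tx) * ty
              = txy⁻¹ * ((a * (tx * b * tx⁻¹))⁻¹ * u) * txy := by
            rw [htxty]; group
          rw [h5]
          exact ((hUxy _).1 hw).2
        have hb_eq : b = r' := hr'uniq b ⟨hb, hbk⟩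
        simp [ha_eq, hb_eq]
    -- c maps into UZ
    have hcUZ : ∀ q : GL (Fin N) ℚ_[p] × GL (Fin N) ℚ_[p], q.1 ∈ s₁ → q.2 ∈ sy → q.1 * (tx * q.2 * tx⁻¹) ∈ UZ := by
      intro q h1 h2
      exact mul_mem (hs₁.1 _ h1) (conj_mem _ (hsy.1 _ h2))
    -- rewrite RHS as sum over the image
    have hterm : ∀ r r' : GL (Fin N) ℚ_[p], r * tx * (r' * ty) = (r * (tx * r' * tx⁻¹)) * txy := by
      intro r r'
      rw [htxty]; group
    have hinj : ∀ q ∈ s₁ ×ˢ sy, ∀ q' ∈ s₁ ×ˢ sy,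
        q.1 * (tx * q.2 * tx⁻¹) = q'.1 * (tx * q'.2 * tx⁻¹) → q = q' := by
      intro q hq q' hq' hqq
      rw [Finset.mem_product] at hq hq'
      have huZ : q.1 * (tx * q.2 * tx⁻¹) ∈ UZ := hcUZ q hq.1 hq.2
      refine (P _ huZ).unique ⟨⟨hq.1, hq.2⟩, ?_⟩ ⟨⟨hq'.1, hq'.2⟩, ?_⟩
      · rw [inv_mul_cancel]; exact one_mem _
      · rw [← hqq, inv_mul_cancel]; exact one_mem _
    calc ∑ r ∈ sxy, π (r * txy) v
        = ∑ a ∈ (s₁ ×ˢ sy).image (fun q : GL (Fin N) ℚ_[p] × GL (Fin N) ℚ_[p] => q.1 * (tx * q.2 * tx⁻¹)),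
            π (a * txy) v := by
          refine transversal_sum Uxy _ _ (fun g => π (g * txy) v) ?_ ?_ ?_
          · intro a ha
            have haZ : a ∈ UZ := hsxy.1 a ha
            obtain ⟨q, ⟨⟨hq1, hq2⟩, hqmem⟩, hquniq⟩ := P a haZ
            refine ⟨q.1 * (tx * q.2 * tx⁻¹),
              ⟨Finset.mem_image.2 ⟨q, Finset.mem_product.2 ⟨hq1, hq2⟩, rfl⟩, hqmem⟩, ?_⟩
            rintro b ⟨hbmem, hba⟩
            obtain ⟨q', hq', rfl⟩ := Finset.mem_image.1 hbmem
            rw [Finset.mem_product] at hq'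
            rw [hquniq q' ⟨⟨hq'.1, hq'.2⟩, hba⟩]
          · intro b hb
            obtain ⟨q, hq, rfl⟩ := Finset.mem_image.1 hb
            rw [Finset.mem_product] at hq
            exact hsxy.2 _ (hcUZ q hq.1 hq.2)
          · intro a _ b _ hab
            exact (val_eq txy a b ((hUxy _).1 hab).2).symm
      _ = ∑ q ∈ s₁ ×ˢ sy, π ((q.1 * (tx * q.2 * tx⁻¹)) * txy) v :=
          Finset.sum_image hinj
      _ = ∑ r ∈ s₁, ∑ r' ∈ sy, π (r * tx * (r' * ty)) v := by
          rw [Finset.sum_product]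
          refine Finset.sum_congr rfl fun r _ => Finset.sum_congr rfl fun r' _ => ?_
          rw [hterm]
end
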